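/- Let z_0^0 ∈ ℝ^d and run the Shuffle Once (SO) Extragradient method: draw a single uniformly random permutation π of {1,…,n} before the first epoch and reuse it in every epoch; for each epoch s = 0,…,S−1 and t = 0,…,n−1 set z_s^{t+1/2} = prox_{γg}(z_s^t − γ F_{π(t)}(z_s^t)) and z_s^{t+1} = prox_{γg}(z_s^t − γ F_{π(t)}(z_s^{t+1/2})), with z_{s+1}^0 = z_s^n. If each F_i is L-Lipschitz and μ-strongly monotone, the variance at the optimum is bounded by σ*², n ≥ 4, and 0 < γ ≤ min{1/(2μn), 1/(6L)}, then after S epochs E‖z_S^n − z*‖² ≤ (1 − γμ/2)^{Sn} ‖z_0^0 − z*‖² + 256 γ n² σ*² / μ. -/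

import Mathlib

open scoped RealInnerProductSpace

section Aux

variable {H : Type*} [NormedAddCommGroup H] [InnerProductSpace ℝ H]

/-- g(prox x) is a real number. -/
lemma exists_real_g_prox (γ : ℝ) (hγ0 : 0 < γ) (g : H → EReal)
    (hg_bot : ∀ x, g x ≠ ⊥) (hg_top : ∃ x, g x ≠ ⊤)
    (prox : H → H)
    (hprox : ∀ x y : H,
      (γ : EReal) * g (prox x) + ((‖prox x - x‖ ^ 2 / 2 : ℝ) : EReal)
        ≤ (γ : EReal) * g y + ((‖y - x‖ ^ 2 / 2 : ℝ) : EReal))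
    (x : H) : ∃ A : ℝ, g (prox x) = (A : EReal) := by
  obtain ⟨y0, hy0⟩ := hg_top
  obtain ⟨r0, hr0⟩ : ∃ r0 : ℝ, g y0 = (r0 : EReal) :=
    ⟨(g y0).toReal, (EReal.coe_toReal hy0 (hg_bot y0)).symm⟩
  refine ⟨(g (prox x)).toReal, (EReal.coe_toReal ?_ (hg_bot _)).symm⟩
  intro htop
  have h1 := hprox x y0
  rw [htop, hr0] at h1
  rw [EReal.mul_top_of_pos (by exact_mod_cast hγ0)] at h1
  rw [EReal.top_add_of_ne_bot (by simp)] at h1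
  have h2 : (γ : EReal) * (r0 : EReal) + ((‖y0 - x‖ ^ 2 / 2 : ℝ) : EReal)
      = ((γ * r0 + ‖y0 - x‖ ^ 2 / 2 : ℝ) : EReal) := by
    rw [← EReal.coe_mul, ← EReal.coe_add]
  rw [h2] at h1
  exact (EReal.coe_lt_top _).not_ge h1

/-- real form of the prox minimality. -/
lemma prox_real (γ : ℝ) (g : H → EReal) (prox : H → H)
    (hprox : ∀ x y : H,
      (γ : EReal) * g (prox x) + ((‖prox x - x‖ ^ 2 / 2 : ℝ) : EReal)
        ≤ (γ : EReal) * g y + ((‖y - x‖ ^ 2 / 2 : ℝ) : EReal))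
    (x y : H) (A B : ℝ) (hA : g (prox x) = (A : EReal)) (hB : g y = (B : EReal)) :
    γ * A + ‖prox x - x‖ ^ 2 / 2 ≤ γ * B + ‖y - x‖ ^ 2 / 2 := by
  have h1 := hprox x y
  rw [hA, hB] at h1
  exact_mod_cast h1

/-- prox inequality with the sharp strong-convexity constant 1/2. -/
lemma prox_half (γ : ℝ) (hγ0 : 0 < γ) (g : H → EReal)
    (hg_bot : ∀ x, g x ≠ ⊥)
    (hg_convex : ∀ (x y : H) (a b : ℝ), 0 ≤ a → 0 ≤ b → a + b = 1 →
      g (a • x + b • y) ≤ (a : EReal) * g x + (b : EReal) * g y)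
    (prox : H → H)
    (hprox : ∀ x y : H,
      (γ : EReal) * g (prox x) + ((‖prox x - x‖ ^ 2 / 2 : ℝ) : EReal)
        ≤ (γ : EReal) * g y + ((‖y - x‖ ^ 2 / 2 : ℝ) : EReal))
    (x y : H) (A B : ℝ) (hA : g (prox x) = (A : EReal)) (hB : g y = (B : EReal)) :
    γ * A + ‖prox x - x‖ ^ 2 / 2 + ‖y - prox x‖ ^ 2 / 2 ≤ γ * B + ‖y - x‖ ^ 2 / 2 := by
  set p := prox x with hp
  have key : ∀ k : ℕ, ∀ (y : H) (B : ℝ), g y = (B : EReal) →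
      γ * A + ‖p - x‖ ^ 2 / 2 + (1/2 - (1/2) ^ (k+1)) * ‖y - p‖ ^ 2
        ≤ γ * B + ‖y - x‖ ^ 2 / 2 := by
    intro k
    induction k with
    | zero =>
      intro y B hB
      have := prox_real γ g prox hprox x y A B hA hB
      norm_num
      linarith
    | succ k ih =>
      intro y B hB
      set m : H := (1/2 : ℝ) • p + (1/2 : ℝ) • y with hm
      have hconv := hg_convex p y (1/2) (1/2) (by norm_num) (by norm_num) (by norm_num)
      rw [hA, hB] at hconv
      have hrhs : ((1/2 : ℝ) : EReal) * (A : EReal) + ((1/2 : ℝ) : EReal) * (B : EReal)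
          = (((A + B) / 2 : ℝ) : EReal) := by
        rw [← EReal.coe_mul, ← EReal.coe_mul, ← EReal.coe_add]; congr 1; ring
      rw [hrhs] at hconv
      obtain ⟨C, hC⟩ : ∃ C : ℝ, g m = (C : EReal) := by
        refine ⟨(g m).toReal, (EReal.coe_toReal ?_ (hg_bot m)).symm⟩
        intro htop
        rw [htop] at hconv
        exact (EReal.coe_lt_top _).not_ge hconv
      have hCle : C ≤ (A + B) / 2 := by
        rw [hC] at hconv; exact_mod_cast hconv
      have hIH := ih m C hC
      -- norm identities
      have hmp : m - p = (1/2 : ℝ) • (y - p) := by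
        rw [hm]; module
      have hmx : m - x = (1/2 : ℝ) • ((p - x) + (y - x)) := by
        rw [hm]; module
      have e1 : ‖m - p‖ ^ 2 = ‖y - p‖ ^ 2 / 4 := by
        rw [hmp, norm_smul]; simp [mul_pow]; ring
      have e2 : ‖m - x‖ ^ 2 = ‖p - x‖ ^ 2 / 2 + ‖y - x‖ ^ 2 / 2 - ‖y - p‖ ^ 2 / 4 := by
        have h3 : ‖m - x‖ ^ 2 = ‖(p - x) + (y - x)‖ ^ 2 / 4 := by
          rw [hmx, norm_smul]; simp [mul_pow]; ring
        have h4 : ‖(p - x) + (y - x)‖ ^ 2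
            = ‖p - x‖ ^ 2 + 2 * ⟪p - x, y - x⟫ + ‖y - x‖ ^ 2 := norm_add_sq_real _ _
        have h5 : ‖y - p‖ ^ 2 = ‖(y - x) + (-(p - x))‖ ^ 2 := by
          congr 1; congr 1; abel
        have h6 : ‖(y - x) + (-(p - x))‖ ^ 2
            = ‖y - x‖ ^ 2 + 2 * ⟪y - x, -(p - x)⟫ + ‖p - x‖ ^ 2 := by
          rw [norm_add_sq_real, norm_neg]
        have h7 : ⟪y - x, -(p - x)⟫ = - ⟪p - x, y - x⟫ := by
          rw [inner_neg_right, real_inner_comm]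
        rw [h3, h4]; rw [h7] at h6; rw [h6] at h5; linarith
      rw [e1, e2] at hIH
      have hγC : γ * C ≤ γ * ((A + B) / 2) := by
        exact mul_le_mul_of_nonneg_left hCle (le_of_lt hγ0)
      have hpow : ((1:ℝ)/2) ^ (k+1+1) = (1/2) ^ (k+1) / 2 := by ring
      rw [hpow]
      linarith
  have hlim : ∀ ε > (0:ℝ), γ * A + ‖p - x‖ ^ 2 / 2 + (1/2) * ‖y - p‖ ^ 2
      ≤ γ * B + ‖y - x‖ ^ 2 / 2 + ε := by
    intro ε hε
    rcases eq_or_lt_of_le (sq_nonneg ‖y - p‖) with hz | hz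
    · have := key 0 y B hB
      rw [← hz] at this ⊢
      norm_num at this ⊢; linarith
    · obtain ⟨k, hk⟩ : ∃ k : ℕ, ((1:ℝ)/2) ^ (k+1) < ε / ‖y - p‖ ^ 2 := by
        obtain ⟨k, hk⟩ := exists_pow_lt_of_lt_one (by positivity : (0:ℝ) < ε / ‖y - p‖ ^ 2)
          (by norm_num : (1:ℝ)/2 < 1)
        exact ⟨k, lt_of_le_of_lt (by
          apply pow_le_pow_of_le_one (by norm_num) (by norm_num); omega) hk⟩
      have hkey := key k y B hB
      have : ((1:ℝ)/2) ^ (k+1) * ‖y - p‖ ^ 2 ≤ ε := le_of_lt ((lt_div_iff₀ hz).mp hk)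
      nlinarith [hkey]
  by_contra hcon
  push_neg at hcon
  have := hlim ((γ * A + ‖p - x‖ ^ 2 / 2 + ‖y - p‖ ^ 2 / 2 - (γ * B + ‖y - x‖ ^ 2 / 2)) / 2)
    (by linarith)
  linarith

end Aux

section Aux2

variable {H : Type*} [NormedAddCommGroup H] [InnerProductSpace ℝ H]

/-- inner-product form of the strong prox inequality. -/
lemma prox_key_of_half (γ : ℝ) (x y p : H) (A B : ℝ)
    (h : γ * A + ‖p - x‖ ^ 2 / 2 + ‖y - p‖ ^ 2 / 2 ≤ γ * B + ‖y - x‖ ^ 2 / 2) :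
    γ * A - γ * B ≤ ⟪y - p, p - x⟫ := by
  have h1 : ‖y - x‖ ^ 2 = ‖y - p‖ ^ 2 + 2 * ⟪y - p, p - x⟫ + ‖p - x‖ ^ 2 := by
    have : y - x = (y - p) + (p - x) := by abel
    rw [this, norm_add_sq_real]
  linarith

/-- core algebraic inequality of one extragradient step. -/
lemma step_core (γ μ L : ℝ) (hγ0 : 0 < γ) (hμ0 : 0 < μ) (hγμ : γ * μ ≤ 1/8) (hγL : γ * L ≤ 1/6)
    (zs zc w zn Fw Fzc Fzs Fbar : H)
    (hA : (0:ℝ) ≤ ⟪zs - zn, zn - zc⟫ + γ * ⟪zs - zn, Fw⟫ + ⟪zn - w, w - zc⟫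
        + γ * ⟪zn - w, Fzc⟫ + γ * ⟪Fbar, w - zs⟫)
    (hmono : μ * ‖w - zs‖ ^ 2 ≤ ⟪Fw - Fzs, w - zs⟫)
    (hcs : ⟪Fzc - Fw, zn - w⟫ ≤ L * ‖w - zc‖ * ‖zn - w‖) :
    ‖zn - zs‖ ^ 2 ≤ (1 - γ*μ/2) * ‖zc - zs‖ ^ 2
      - (17/24) * (‖zn - w‖ ^ 2 + ‖w - zc‖ ^ 2)
      - γ*μ*‖w - zs‖ ^ 2 + 2*γ*⟪Fzs - Fbar, zs - w⟫ := by
  -- inner product / norm identities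
  have e1 : ⟪zs - zn, zn - zc⟫ = (‖zc - zs‖ ^ 2 - ‖zn - zs‖ ^ 2 - ‖zn - zc‖ ^ 2) / 2 := by
    have h1 : zs - zc = (zs - zn) + (zn - zc) := by abel
    have h2 : ‖zs - zc‖ ^ 2 = ‖zs - zn‖ ^ 2 + 2 * ⟪zs - zn, zn - zc⟫ + ‖zn - zc‖ ^ 2 := by
      rw [h1]; exact norm_add_sq_real _ _
    rw [norm_sub_rev zs zc, norm_sub_rev zs zn] at h2
    linarith
  have e2 : ⟪zn - w, w - zc⟫ = (‖zn - zc‖ ^ 2 - ‖zn - w‖ ^ 2 - ‖w - zc‖ ^ 2) / 2 := by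
    have h1 : zn - zc = (zn - w) + (w - zc) := by abel
    have h2 : ‖zn - zc‖ ^ 2 = ‖zn - w‖ ^ 2 + 2 * ⟪zn - w, w - zc⟫ + ‖w - zc‖ ^ 2 := by
      rw [h1]; exact norm_add_sq_real _ _
    linarith
  have ekey : ⟪zs - zn, Fw⟫ + ⟪zn - w, Fzc⟫ + ⟪Fbar, w - zs⟫
      = ⟪Fzc - Fw, zn - w⟫ - ⟪Fw - Fzs, w - zs⟫ - ⟪Fzs - Fbar, w - zs⟫ := by
    rw [real_inner_comm Fw (zs - zn), real_inner_comm Fzc (zn - w)]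
    simp only [inner_sub_left, inner_sub_right]
    ring
  have eflip : ⟪Fzs - Fbar, zs - w⟫ = - ⟪Fzs - Fbar, w - zs⟫ := by
    have : zs - w = -(w - zs) := by abel
    rw [this, inner_neg_right]
  -- Young inequalities
  have hwzc : (0:ℝ) ≤ ‖w - zc‖ := norm_nonneg _
  have hznw : (0:ℝ) ≤ ‖zn - w‖ := norm_nonneg _
  have young1 : γ * ⟪Fzc - Fw, zn - w⟫ ≤ (1/12) * (‖zn - w‖ ^ 2 + ‖w - zc‖ ^ 2) := by
    have h1 : γ * ⟪Fzc - Fw, zn - w⟫ ≤ γ * (L * ‖w - zc‖ * ‖zn - w‖) :=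
      mul_le_mul_of_nonneg_left hcs (le_of_lt hγ0)
    have h2 : γ * (L * ‖w - zc‖ * ‖zn - w‖) ≤ (1/6) * (‖w - zc‖ * ‖zn - w‖) := by
      have := mul_le_mul_of_nonneg_right hγL (mul_nonneg hwzc hznw)
      nlinarith
    nlinarith [sq_nonneg (‖w - zc‖ - ‖zn - w‖)]
  have hu : ‖zc - zs‖ ^ 2 ≤ 2 * ‖w - zs‖ ^ 2 + 2 * ‖w - zc‖ ^ 2 := by
    have h1 : zc - zs = (w - zs) - (w - zc) := by abel
    have h2 : ‖zc - zs‖ ≤ ‖w - zs‖ + ‖w - zc‖ := by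
      rw [h1]; exact norm_sub_le _ _
    nlinarith [mul_self_le_mul_self (norm_nonneg (zc - zs)) h2,
      sq_nonneg (‖w - zs‖ - ‖w - zc‖), norm_nonneg (w - zs), norm_nonneg (zc - zs)]
  have hmono' : γ * μ * ‖w - zs‖ ^ 2 ≤ γ * ⟪Fw - Fzs, w - zs⟫ := by
    have := mul_le_mul_of_nonneg_left hmono (le_of_lt hγ0)
    linarith [this]
  have hmul3 : γ * μ / 2 * ‖zc - zs‖ ^ 2 ≤ γ * μ / 2 * (2 * ‖w - zs‖ ^ 2 + 2 * ‖w - zc‖ ^ 2) :=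
    mul_le_mul_of_nonneg_left hu (by positivity)
  have hmul4 : γ * μ * ‖w - zc‖ ^ 2 ≤ (1/8) * ‖w - zc‖ ^ 2 :=
    mul_le_mul_of_nonneg_right hγμ (sq_nonneg _)
  have ekey2 : γ * ⟪zs - zn, Fw⟫ + γ * ⟪zn - w, Fzc⟫ + γ * ⟪Fbar, w - zs⟫
      = γ * ⟪Fzc - Fw, zn - w⟫ - γ * ⟪Fw - Fzs, w - zs⟫ - γ * ⟪Fzs - Fbar, w - zs⟫ := by
    linear_combination γ * ekey
  rw [eflip]
  linarith [hA, ekey2, e1, e2, young1, hmono', hmul3, hmul4, sq_nonneg ‖zn - w‖]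
end Aux2

lemma young_aux (c x y : ℝ) (hc : 0 < c) : 2*x*y ≤ c*x^2 + y^2/c := by
  rw [← mul_le_mul_iff_of_pos_right hc]
  have h : (c*x^2 + y^2/c)*c = c^2*x^2 + y^2 := by field_simp
  rw [h]
  nlinarith [sq_nonneg (c*x - y)]

lemma weight_shift (c P M B : ℝ) (hPM : 0 ≤ (1-c)*(P+M)) (h2 : (1-c)*M ≤ B) :
    c*P ≤ P + B := by nlinarith [hPM, h2]


section Epoch

variable {H : Type*} [NormedAddCommGroup H] [InnerProductSpace ℝ H]

set_option maxHeartbeats 2000000 in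
lemma epoch_bound (n : ℕ) (hn : 4 ≤ n)
    (γ μ q σ2 : ℝ) (hγ0 : 0 < γ) (hμ : 0 < μ) (hγμ0 : (0:ℝ) ≤ γ*μ) (hγμ : γ*μ ≤ 1/8)
    (hq0 : (0:ℝ) ≤ q) (hq1 : q ≤ 1) (hqn34 : (3:ℝ)/4 ≤ q^n)
    (hqn_lb : 1 - (n:ℝ)*(γ*μ/2) ≤ q^n)
    (hσ2 : (0:ℝ) ≤ σ2)
    (D : Fin n → H) (zstar : H)
    (hDzero : ∑ i, D i = 0) (hDsq : ∑ i, ‖D i‖^2 ≤ 4*(n:ℝ)*σ2)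
    (π : Equiv.Perm (Fin n))
    (Z W : ℕ → H)
    (hst : ∀ t, ∀ ht : t < n, ‖Z (t+1) - zstar‖^2 ≤ q*‖Z t - zstar‖^2
        - (17/24)*(‖Z (t+1) - W t‖^2 + ‖W t - Z t‖^2) - γ*μ*‖W t - zstar‖^2
        + 2*γ*⟪D (π ⟨t, ht⟩), zstar - W t⟫) :
    ‖Z n - zstar‖^2 ≤ q^n * ‖Z 0 - zstar‖^2 + 49*γ^2*(n:ℝ)^3*σ2 := by
  have hn0 : 0 < n := by omega
  have hnR : (4:ℝ) ≤ (n:ℝ) := by exact_mod_cast hn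
  have hnR0 : (0:ℝ) < (n:ℝ) := by linarith
  set Dn : ℕ → H := fun t => if ht : t < n then D (π ⟨t, ht⟩) else 0 with hDn
  set av : ℕ → ℝ := fun t => ‖Z (t+1) - W t‖ with hav
  set bv : ℕ → ℝ := fun t => ‖W t - Z t‖ with hbv
  set Vv : ℕ → ℝ := fun t => ‖W t - zstar‖ with hVv
  set dv : ℕ → ℝ := fun t => ‖Dn t‖ with hdv
  set ip : ℕ → ℝ := fun t => ⟪Dn t, zstar - W t⟫ with hip
  set ee : ℕ → ℝ := fun t => -(17/24)*(av t^2 + bv t^2) - γ*μ*(Vv t)^2 + 2*γ*(ip t) with hee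
  have hav0 : ∀ t, 0 ≤ av t := fun t => norm_nonneg _
  have hbv0 : ∀ t, 0 ≤ bv t := fun t => norm_nonneg _
  have hVv0 : ∀ t, 0 ≤ Vv t := fun t => norm_nonneg _
  have hdv0 : ∀ t, 0 ≤ dv t := fun t => norm_nonneg _
  have hstep' : ∀ t, t < n → ‖Z (t+1) - zstar‖^2 ≤ q * ‖Z t - zstar‖^2 + ee t := by
    intro t ht
    have h := hst t ht
    have heq : ee t = -(17/24)*(‖Z (t+1) - W t‖^2 + ‖W t - Z t‖^2) - γ*μ*‖W t - zstar‖^2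
        + 2*γ*⟪D (π ⟨t, ht⟩), zstar - W t⟫ := by
      simp only [hee, hav, hbv, hVv, hip, hDn]
      rw [dif_pos ht]
    rw [heq]
    linarith
  -- weighted recursion
  have hrec : ∀ m, m ≤ n → ‖Z m - zstar‖^2
      ≤ q^m * ‖Z 0 - zstar‖^2 + ∑ t ∈ Finset.range m, q^(m-1-t) * ee t := by
    intro m
    induction m with
    | zero => intro _; simp
    | succ m ihm =>
      intro hm1
      have hm : m < n := by omega
      have ih := ihm (by omega)
      have h1 := hstep' m hm
      have h2 := mul_le_mul_of_nonneg_left ih hq0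
      have h3 : q * (q^m * ‖Z 0 - zstar‖^2 + ∑ t ∈ Finset.range m, q^(m-1-t) * ee t)
          = q^(m+1) * ‖Z 0 - zstar‖^2 + ∑ t ∈ Finset.range m, q^(m-t) * ee t := by
        rw [mul_add, Finset.mul_sum, ← mul_assoc, ← pow_succ']
        congr 1
        apply Finset.sum_congr rfl
        intro t htm
        have htm' : t < m := Finset.mem_range.mp htm
        have he : m - t = (m - 1 - t) + 1 := by omega
        rw [he, pow_succ']
        ring
      have h4 : ∑ t ∈ Finset.range (m+1), q^(m+1-1-t) * ee t
          = ∑ t ∈ Finset.range m, q^(m-t) * ee t + ee m := by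
        rw [Finset.sum_range_succ]
        simp only [Nat.add_sub_cancel, Nat.sub_self, pow_zero, one_mul]
      rw [h4]
      rw [h3] at h2
      linarith
  -- sum abbreviations
  set Sa := ∑ t ∈ Finset.range n, (av t^2 + bv t^2) with hSa
  set Vs := ∑ t ∈ Finset.range n, (Vv t)^2 with hVsdef
  have hSa0 : 0 ≤ Sa := Finset.sum_nonneg (fun t _ => by positivity)
  have hVs0 : 0 ≤ Vs := Finset.sum_nonneg (fun t _ => by positivity)
  -- reindexing facts
  have hDS : ∑ t ∈ Finset.range n, (dv t)^2 ≤ 4*(n:ℝ)*σ2 := by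
    have h1 : ∑ t ∈ Finset.range n, (dv t)^2 = ∑ i : Fin n, ‖D (π i)‖^2 := by
      rw [← Fin.sum_univ_eq_sum_range (fun t => (dv t)^2) n]
      apply Finset.sum_congr rfl
      intro i _
      simp only [hdv, hDn]
      rw [dif_pos i.isLt]
    rw [h1, Equiv.sum_comp π (fun i => ‖D i‖^2)]
    exact hDsq
  have hDnzero : ∑ t ∈ Finset.range n, Dn t = 0 := by
    have h1 : ∑ t ∈ Finset.range n, Dn t = ∑ i : Fin n, D (π i) := by
      rw [← Fin.sum_univ_eq_sum_range Dn n]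
      apply Finset.sum_congr rfl
      intro i _
      simp only [hDn]
      rw [dif_pos i.isLt]
    rw [h1, Equiv.sum_comp π D]
    exact hDzero
  -- termwise weight bound
  have hterm : ∀ t ∈ Finset.range n, q^(n-1-t) * ee t
      ≤ (-(17/24)*q^n)*(av t^2 + bv t^2) + (-(γ*μ*q^n))*(Vv t)^2 + (2*γ)*(ip t)
        + ((n:ℝ)*γ^2*μ)*(dv t * Vv t) := by
    intro t htm
    have ht : t < n := Finset.mem_range.mp htm
    have hc2 : q^n ≤ q^(n-1-t) := pow_le_pow_of_le_one hq0 hq1 (by omega)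
    have hc1 : q^(n-1-t) ≤ 1 := pow_le_one₀ hq0 hq1
    have hc0 : (0:ℝ) ≤ q^(n-1-t) := pow_nonneg hq0 _
    have hcb : 1 - q^(n-1-t) ≤ (n:ℝ)*(γ*μ/2) := by linarith
    have hipb : |ip t| ≤ dv t * Vv t := by
      simp only [hip, hdv, hVv]
      have h := abs_real_inner_le_norm (Dn t) (zstar - W t)
      rw [norm_sub_rev zstar (W t)] at h
      exact h
    have hX : -(17/24)*(av t^2 + bv t^2) - γ*μ*(Vv t)^2 ≤ 0 := by
      have h1 : 0 ≤ γ*μ*(Vv t)^2 := mul_nonneg hγμ0 (sq_nonneg _)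
      linarith [sq_nonneg (av t), sq_nonneg (bv t)]
    have hp1 : q^(n-1-t) * (-(17/24)*(av t^2+bv t^2) - γ*μ*(Vv t)^2)
        ≤ q^n * (-(17/24)*(av t^2+bv t^2) - γ*μ*(Vv t)^2) :=
      mul_le_mul_of_nonpos_right hc2 hX
    have hdvV0 : (0:ℝ) ≤ 2*γ*(dv t * Vv t) :=
      mul_nonneg (by linarith) (mul_nonneg (hdv0 t) (hVv0 t))
    have habs : -(2*γ*(dv t * Vv t)) ≤ 2*γ*(ip t) := by
      have h1 : -(dv t * Vv t) ≤ ip t := by linarith [neg_abs_le (ip t), hipb]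
      have h2 := mul_le_mul_of_nonneg_left h1 (by linarith : (0:ℝ) ≤ 2*γ)
      linarith [h2]
    have hp2 : q^(n-1-t)*(2*γ*(ip t)) ≤ 2*γ*(ip t) + (n:ℝ)*(γ*μ/2)*(2*γ*(dv t * Vv t)) := by
      exact weight_shift (q^(n-1-t)) (2*γ*(ip t)) (2*γ*(dv t * Vv t))
        ((n:ℝ)*(γ*μ/2)*(2*γ*(dv t * Vv t)))
        (mul_nonneg (by linarith) (by linarith [habs]))
        (mul_le_mul_of_nonneg_right hcb hdvV0)
    have hsplit : q^(n-1-t) * ee t = q^(n-1-t) * (-(17/24)*(av t^2+bv t^2) - γ*μ*(Vv t)^2)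
        + q^(n-1-t)*(2*γ*(ip t)) := by
      simp only [hee]; ring
    rw [hsplit]
    linarith [hp1, hp2]
  have hTsum : ∑ t ∈ Finset.range n, q^(n-1-t) * ee t
      ≤ (-(17/24)*q^n)*Sa + (-(γ*μ*q^n))*Vs + (2*γ)*(∑ t ∈ Finset.range n, ip t)
        + ((n:ℝ)*γ^2*μ)*(∑ t ∈ Finset.range n, dv t * Vv t) := by
    have h := Finset.sum_le_sum hterm
    have h2 : ∑ t ∈ Finset.range n, ((-(17/24)*q^n)*(av t^2 + bv t^2)
          + (-(γ*μ*q^n))*(Vv t)^2 + (2*γ)*(ip t) + ((n:ℝ)*γ^2*μ)*(dv t * Vv t))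
        = (-(17/24)*q^n)*Sa + (-(γ*μ*q^n))*Vs + (2*γ)*(∑ t ∈ Finset.range n, ip t)
          + ((n:ℝ)*γ^2*μ)*(∑ t ∈ Finset.range n, dv t * Vv t) := by
      rw [hSa, hVsdef]
      simp only [Finset.sum_add_distrib, ← Finset.mul_sum]
    rw [← h2]
    exact h
  -- shuffle cancellation: Hs only involves drift from W 0
  have hHsplit : ∑ t ∈ Finset.range n, ip t
      = ∑ t ∈ Finset.range n, ⟪Dn t, W 0 - W t⟫ := by
    have h1 : ∀ t ∈ Finset.range n, ip t = ⟪Dn t, W 0 - W t⟫ + ⟪Dn t, zstar - W 0⟫ := by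
      intro t _
      simp only [hip]
      rw [← inner_add_right]
      congr 1
      abel
    rw [Finset.sum_congr rfl h1, Finset.sum_add_distrib]
    have h2 : ∑ t ∈ Finset.range n, ⟪Dn t, zstar - W 0⟫ = (0:ℝ) := by
      rw [← sum_inner, hDnzero, inner_zero_left]
    rw [h2, add_zero]
  -- path-length bound
  have hpath : ∀ t, t < n → ‖W t - W 0‖ ≤ bv t + bv 0 + ∑ k ∈ Finset.range t, (av k + bv k) := by
    intro t ht
    have hdec : W t - W 0 = (W t - Z t) + (Z t - Z 0) + (Z 0 - W 0) := by abel
    have h0 : ‖W t - W 0‖ ≤ ‖W t - Z t‖ + ‖Z t - Z 0‖ + ‖Z 0 - W 0‖ := by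
      rw [hdec]; exact norm_add₃_le
    have h1 : Z t - Z 0 = ∑ k ∈ Finset.range t, (Z (k+1) - Z k) :=
      (Finset.sum_range_sub Z t).symm
    have h2 : ‖Z t - Z 0‖ ≤ ∑ k ∈ Finset.range t, (av k + bv k) := by
      rw [h1]
      refine le_trans (norm_sum_le _ _) (Finset.sum_le_sum ?_)
      intro k _
      have hk : Z (k+1) - Z k = (Z (k+1) - W k) + (W k - Z k) := by abel
      have hk2 : av k = ‖Z (k+1) - W k‖ := by simp only [hav]
      have hk3 : bv k = ‖W k - Z k‖ := by simp only [hbv]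
      rw [hk, hk2, hk3]
      exact norm_add_le _ _
    have h3 : ‖Z 0 - W 0‖ = bv 0 := by rw [norm_sub_rev]
    have h4 : ‖W t - Z t‖ = bv t := rfl
    linarith
  -- Young inequalities on the drift terms
  have hyoungt : ∀ t ∈ Finset.range n, (2*γ)*⟪Dn t, W 0 - W t⟫
      ≤ (16*(n:ℝ) + 8*(n:ℝ)^2)*(γ^2*(dv t)^2) + ((bv t)^2 + (bv 0)^2)/(8*(n:ℝ))
        + (∑ k ∈ Finset.range t, ((av k)^2 + (bv k)^2))/(4*(n:ℝ)) := by
    intro t htm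
    have ht := Finset.mem_range.mp htm
    have htn : (t:ℝ) ≤ (n:ℝ) := by exact_mod_cast le_of_lt ht
    have hinner : ⟪Dn t, W 0 - W t⟫ ≤ dv t * ‖W t - W 0‖ := by
      have h := real_inner_le_norm (Dn t) (W 0 - W t)
      rw [norm_sub_rev (W 0) (W t)] at h
      exact h
    have h2γ : (0:ℝ) ≤ 2*γ := by linarith
    have h2γdv : (0:ℝ) ≤ 2*γ*dv t := mul_nonneg h2γ (hdv0 t)
    have hall : (2*γ)*⟪Dn t, W 0 - W t⟫
        ≤ 2*(γ*dv t)*(bv t) + 2*(γ*dv t)*(bv 0)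
          + 2*(γ*dv t)*(∑ k ∈ Finset.range t, (av k + bv k)) := by
      have ha := mul_le_mul_of_nonneg_left hinner h2γ
      have hb := mul_le_mul_of_nonneg_left (hpath t ht) h2γdv
      linarith [ha, hb]
    have hs1 := young_aux (8*(n:ℝ)) (γ*dv t) (bv t) (by linarith)
    have hs2 := young_aux (8*(n:ℝ)) (γ*dv t) (bv 0) (by linarith)
    have hs3 : ∀ k ∈ Finset.range t, 2*(γ*dv t)*(av k + bv k)
        ≤ 8*(n:ℝ)*(γ*dv t)^2 + ((av k)^2 + (bv k)^2)/(4*(n:ℝ)) := by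
      intro k _
      have ha := young_aux (4*(n:ℝ)) (γ*dv t) (av k) (by linarith)
      have hb := young_aux (4*(n:ℝ)) (γ*dv t) (bv k) (by linarith)
      have hd : (av k)^2/(4*(n:ℝ)) + (bv k)^2/(4*(n:ℝ)) = ((av k)^2 + (bv k)^2)/(4*(n:ℝ)) := by
        ring
      linarith
    have hs4 := Finset.sum_le_sum hs3
    have hs5 : ∑ k ∈ Finset.range t, 2*(γ*dv t)*(av k + bv k)
        = 2*(γ*dv t)*(∑ k ∈ Finset.range t, (av k + bv k)) := by
      rw [Finset.mul_sum]
    have hs6 : ∑ k ∈ Finset.range t, (8*(n:ℝ)*(γ*dv t)^2 + ((av k)^2 + (bv k)^2)/(4*(n:ℝ)))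
        = (t:ℝ)*(8*(n:ℝ)*(γ*dv t)^2)
          + (∑ k ∈ Finset.range t, ((av k)^2 + (bv k)^2))/(4*(n:ℝ)) := by
      rw [Finset.sum_add_distrib, Finset.sum_const, Finset.card_range, nsmul_eq_mul,
        Finset.sum_div]
    have hs7 : (t:ℝ)*(8*(n:ℝ)*(γ*dv t)^2) ≤ (n:ℝ)*(8*(n:ℝ)*(γ*dv t)^2) :=
      mul_le_mul_of_nonneg_right htn (by positivity)
    rw [hs5, hs6] at hs4
    have he : ((bv t)^2+(bv 0)^2)/(8*(n:ℝ)) = (bv t)^2/(8*(n:ℝ)) + (bv 0)^2/(8*(n:ℝ)) := by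
      ring
    linarith [hall, hs1, hs2, hs4, hs7, he]
  -- auxiliary sum bounds
  have hb0 : (bv 0)^2 ≤ Sa := by
    have h1 : av 0^2 + bv 0^2 ≤ Sa := by
      rw [hSa]
      refine Finset.single_le_sum (f := fun t => av t^2 + bv t^2) (fun t _ => by positivity) ?_
      exact Finset.mem_range.mpr hn0
    linarith [sq_nonneg (av 0)]
  have hbts : ∑ t ∈ Finset.range n, (bv t)^2 ≤ Sa := by
    rw [hSa]
    exact Finset.sum_le_sum (fun t _ => by linarith [sq_nonneg (av t)])
  have hdbl : ∑ t ∈ Finset.range n, (∑ k ∈ Finset.range t, ((av k)^2 + (bv k)^2))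
      ≤ (n:ℝ)*Sa := by
    have h1 : ∀ t ∈ Finset.range n, (∑ k ∈ Finset.range t, ((av k)^2+(bv k)^2)) ≤ Sa := by
      intro t htm
      rw [hSa]
      apply Finset.sum_le_sum_of_subset_of_nonneg
      · exact Finset.range_subset_range.mpr (le_of_lt (Finset.mem_range.mp htm))
      · intro k _ _; positivity
    calc ∑ t ∈ Finset.range n, (∑ k ∈ Finset.range t, ((av k)^2+(bv k)^2))
        ≤ ∑ _t ∈ Finset.range n, Sa := Finset.sum_le_sum h1
      _ = (n:ℝ)*Sa := by rw [Finset.sum_const, Finset.card_range, nsmul_eq_mul]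
  -- the drift bound
  have hdrift : (2*γ)*(∑ t ∈ Finset.range n, ip t) ≤ 48*γ^2*(n:ℝ)^3*σ2 + (13/32)*Sa := by
    rw [hHsplit, Finset.mul_sum]
    have h2 := Finset.sum_le_sum hyoungt
    have h3 : ∑ t ∈ Finset.range n, ((16*(n:ℝ) + 8*(n:ℝ)^2)*(γ^2*(dv t)^2)
          + ((bv t)^2 + (bv 0)^2)/(8*(n:ℝ))
          + (∑ k ∈ Finset.range t, ((av k)^2 + (bv k)^2))/(4*(n:ℝ)))
        = (16*(n:ℝ) + 8*(n:ℝ)^2)*γ^2*(∑ t ∈ Finset.range n, (dv t)^2)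
          + ((∑ t ∈ Finset.range n, (bv t)^2) + (n:ℝ)*(bv 0)^2)/(8*(n:ℝ))
          + (∑ t ∈ Finset.range n, (∑ k ∈ Finset.range t, ((av k)^2 + (bv k)^2)))/(4*(n:ℝ)) := by
      rw [Finset.sum_add_distrib, Finset.sum_add_distrib, ← Finset.sum_div, ← Finset.sum_div,
        Finset.sum_add_distrib, Finset.sum_const, Finset.card_range, nsmul_eq_mul,
        Finset.mul_sum]
      congr 1
      congr 1
      apply Finset.sum_congr rfl
      intro t _
      ring
    rw [h3] at h2
    -- bound the three pieces
    have hA : (16*(n:ℝ) + 8*(n:ℝ)^2)*γ^2*(∑ t ∈ Finset.range n, (dv t)^2)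
        ≤ 48*γ^2*(n:ℝ)^3*σ2 := by
      have ha1 : (16*(n:ℝ) + 8*(n:ℝ)^2)*γ^2*(∑ t ∈ Finset.range n, (dv t)^2)
          ≤ (16*(n:ℝ) + 8*(n:ℝ)^2)*γ^2*(4*(n:ℝ)*σ2) :=
        mul_le_mul_of_nonneg_left hDS (by positivity)
      have key : (0:ℝ) ≤ 16*(n:ℝ)^2*((n:ℝ)-4)*γ^2*σ2 := by
        have : (0:ℝ) ≤ (n:ℝ)-4 := by linarith
        positivity
      nlinarith [ha1, key]
    have hB : ((∑ t ∈ Finset.range n, (bv t)^2) + (n:ℝ)*(bv 0)^2)/(8*(n:ℝ))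
        ≤ (5/32)*Sa := by
      rw [div_le_iff₀ (by positivity : (0:ℝ) < 8*(n:ℝ))]
      have h4 : (n:ℝ)*(bv 0)^2 ≤ (n:ℝ)*Sa := mul_le_mul_of_nonneg_left hb0 (by positivity)
      nlinarith [hbts, h4, hSa0]
    have hC : (∑ t ∈ Finset.range n, (∑ k ∈ Finset.range t, ((av k)^2 + (bv k)^2)))/(4*(n:ℝ))
        ≤ (1/4)*Sa := by
      rw [div_le_iff₀ (by positivity : (0:ℝ) < 4*(n:ℝ))]
      nlinarith [hdbl, hSa0]
    linarith [h2, hA, hB, hC]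
  -- the correction term bound
  have hDV : ((n:ℝ)*γ^2*μ)*(∑ t ∈ Finset.range n, dv t * Vv t)
      ≤ γ^2*(n:ℝ)^3*σ2 + (γ*μ/2)*Vs := by
    have hpt : ∀ t ∈ Finset.range n, ((n:ℝ)*γ^2*μ)*(dv t * Vv t)
        ≤ (γ^3*μ*(n:ℝ)^2/2)*((dv t)^2) + (γ*μ/2)*((Vv t)^2) := by
      intro t _
      nlinarith [mul_nonneg hγμ0 (sq_nonneg ((n:ℝ)*γ*dv t - Vv t))]
    have h1 : ((n:ℝ)*γ^2*μ)*(∑ t ∈ Finset.range n, dv t * Vv t)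
        = ∑ t ∈ Finset.range n, ((n:ℝ)*γ^2*μ)*(dv t * Vv t) := Finset.mul_sum _ _ _
    have h2 := Finset.sum_le_sum hpt
    have h3 : ∑ t ∈ Finset.range n, ((γ^3*μ*(n:ℝ)^2/2)*((dv t)^2) + (γ*μ/2)*((Vv t)^2))
        = (γ^3*μ*(n:ℝ)^2/2)*(∑ t ∈ Finset.range n, (dv t)^2) + (γ*μ/2)*Vs := by
      rw [Finset.sum_add_distrib, ← Finset.mul_sum, ← Finset.mul_sum, hVsdef]
    have h4 : (γ^3*μ*(n:ℝ)^2/2)*(∑ t ∈ Finset.range n, (dv t)^2)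
        ≤ (γ^3*μ*(n:ℝ)^2/2)*(4*(n:ℝ)*σ2) :=
      mul_le_mul_of_nonneg_left hDS (by positivity)
    have h5 : (γ^3*μ*(n:ℝ)^2/2)*(4*(n:ℝ)*σ2) ≤ γ^2*(n:ℝ)^3*σ2 := by
      have h6 : 2*γ*μ ≤ 1 := by linarith
      have h7 : (0:ℝ) ≤ γ^2*(n:ℝ)^3*σ2 := by positivity
      nlinarith [mul_le_mul_of_nonneg_right h6 h7]
    rw [h1]
    rw [h3] at h2
    linarith [h2, h4, h5]
  -- final assembly
  have hfin0 := hrec n le_rfl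
  have hq34a := mul_le_mul_of_nonneg_right hqn34 hSa0
  have hq34V := mul_le_mul_of_nonneg_left (mul_le_mul_of_nonneg_right hqn34 hVs0) hγμ0
  have hγμVs := mul_nonneg hγμ0 hVs0
  linarith [hfin0, hTsum, hdrift, hDV, hq34a, hq34V, hγμVs, hSa0]

end Epoch


set_option maxHeartbeats 1000000 in
theorem so_extragradient_convergence
    (d n S : ℕ) (hn : 4 ≤ n) (hS : 0 < S)
    (L μ γ σstar : ℝ) (hL : 0 < L) (hμ : 0 < μ)
    (hγ0 : 0 < γ) (hγ1 : γ ≤ 1 / (2 * μ * n)) (hγ2 : γ ≤ 1 / (6 * L))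
    (F : Fin n → EuclideanSpace ℝ (Fin d) → EuclideanSpace ℝ (Fin d))
    (g : EuclideanSpace ℝ (Fin d) → EReal)
    (hg_bot : ∀ x, g x ≠ ⊥) (hg_top : ∃ x, g x ≠ ⊤)
    (hg_convex : ∀ (x y : EuclideanSpace ℝ (Fin d)) (a b : ℝ), 0 ≤ a → 0 ≤ b → a + b = 1 →
      g (a • x + b • y) ≤ (a : EReal) * g x + (b : EReal) * g y)
    (hg_lsc : LowerSemicontinuous g)
    (prox : EuclideanSpace ℝ (Fin d) → EuclideanSpace ℝ (Fin d))
    (hprox : ∀ x y : EuclideanSpace ℝ (Fin d),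
      (γ : EReal) * g (prox x) + ((‖prox x - x‖ ^ 2 / 2 : ℝ) : EReal)
        ≤ (γ : EReal) * g y + ((‖y - x‖ ^ 2 / 2 : ℝ) : EReal))
    (hLip : ∀ (i : Fin n) (z₁ z₂ : EuclideanSpace ℝ (Fin d)),
      ‖F i z₁ - F i z₂‖ ≤ L * ‖z₁ - z₂‖)
    (hmono : ∀ (i : Fin n) (z₁ z₂ : EuclideanSpace ℝ (Fin d)),
      μ * ‖z₁ - z₂‖ ^ 2 ≤ ⟪F i z₁ - F i z₂, z₁ - z₂⟫)
    (zstar : EuclideanSpace ℝ (Fin d))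
    (hVI : ∀ z, g zstar ≤ ((⟪(n : ℝ)⁻¹ • ∑ i, F i zstar, z - zstar⟫ : ℝ) : EReal) + g z)
    (hvar1 : (n : ℝ)⁻¹ * ∑ i, ‖F i zstar‖ ^ 2 ≤ σstar ^ 2)
    (hvar2 : ‖(n : ℝ)⁻¹ • ∑ i, F i zstar‖ ^ 2 ≤ σstar ^ 2)
    (z00 : EuclideanSpace ℝ (Fin d))
    (z zhalf : Equiv.Perm (Fin n) → ℕ → ℕ → EuclideanSpace ℝ (Fin d))
    (hinit : ∀ π, z π 0 0 = z00)
    (hhalf : ∀ π, ∀ s, ∀ hs : s < S, ∀ t, ∀ ht : t < n,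
      zhalf π s t = prox (z π s t - γ • F (π ⟨t, ht⟩) (z π s t)))
    (hstep : ∀ π, ∀ s, ∀ hs : s < S, ∀ t, ∀ ht : t < n,
      z π s (t + 1) = prox (z π s t - γ • F (π ⟨t, ht⟩) (zhalf π s t)))
    (hepoch : ∀ π, ∀ s, s + 1 ≤ S → z π (s + 1) 0 = z π s n) :
    (∑ π : Equiv.Perm (Fin n), ‖z π (S - 1) n - zstar‖ ^ 2) /
        (Fintype.card (Equiv.Perm (Fin n)) : ℝ)
      ≤ (1 - γ * μ / 2) ^ (S * n) * ‖z00 - zstar‖ ^ 2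
        + 256 * γ * (n : ℝ) ^ 2 * σstar ^ 2 / μ := by
  classical
  have hn0 : 0 < n := by omega
  have hnR : (4:ℝ) ≤ (n:ℝ) := by exact_mod_cast hn
  have hnR0 : (0:ℝ) < (n:ℝ) := by linarith
  have hγμn : γ * μ * (n:ℝ) ≤ 1/2 := by
    have h2 : (0:ℝ) < 2 * μ * (n:ℝ) := by positivity
    rw [le_div_iff₀ h2] at hγ1
    nlinarith
  have hγμ0 : (0:ℝ) ≤ γ * μ := by positivity
  have hγμ : γ * μ ≤ 1/8 := by nlinarith
  have hγL : γ * L ≤ 1/6 := by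
    have h6 : (0:ℝ) < 6 * L := by positivity
    rw [le_div_iff₀ h6] at hγ2
    nlinarith
  set q : ℝ := 1 - γ * μ / 2 with hqdef
  have hq0 : (0:ℝ) ≤ q := by rw [hqdef]; linarith
  have hq1 : q ≤ 1 := by rw [hqdef]; linarith
  have hqn_lb : 1 - (n:ℝ) * (γ * μ / 2) ≤ q ^ n := by
    have h := one_add_mul_le_pow (a := -(γ * μ / 2)) (by linarith : (-2:ℝ) ≤ -(γ * μ / 2)) n
    have h2 : (1 : ℝ) + (n:ℝ) * -(γ * μ / 2) = 1 - (n:ℝ) * (γ * μ / 2) := by ring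
    have h3 : (1 : ℝ) + -(γ * μ / 2) = q := by rw [hqdef]; ring
    rw [h2, h3] at h
    exact h
  have hnγμ4 : (n:ℝ) * (γ * μ / 2) ≤ 1/4 := by nlinarith
  have hqn34 : (3:ℝ)/4 ≤ q ^ n := by linarith
  have hqn1 : q ^ n ≤ 1 := pow_le_one₀ hq0 hq1
  -- variance setup
  have hσ2 : (0:ℝ) ≤ σstar ^ 2 := sq_nonneg _
  set Fbar : EuclideanSpace ℝ (Fin d) := (n:ℝ)⁻¹ • ∑ i, F i zstar with hFbar
  set D : Fin n → EuclideanSpace ℝ (Fin d) := fun i => F i zstar - Fbar with hDdef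
  have hDzero : ∑ i, D i = 0 := by
    simp only [hDdef]
    rw [Finset.sum_sub_distrib, Finset.sum_const, Finset.card_univ, Fintype.card_fin]
    rw [hFbar]
    rw [← Nat.cast_smul_eq_nsmul ℝ, smul_smul, mul_inv_cancel₀ (ne_of_gt hnR0), one_smul]
    exact sub_self _
  have hsumF : ∑ i, ‖F i zstar‖ ^ 2 ≤ (n:ℝ) * σstar ^ 2 := by
    have h1 := mul_le_mul_of_nonneg_left hvar1 (le_of_lt hnR0)
    have h2 : (n:ℝ) * ((n:ℝ)⁻¹ * ∑ i, ‖F i zstar‖ ^ 2) = ∑ i, ‖F i zstar‖ ^ 2 := by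
      field_simp
    rw [h2] at h1
    exact h1
  have hDsq : ∑ i, ‖D i‖ ^ 2 ≤ 4 * (n:ℝ) * σstar ^ 2 := by
    have h1 : ∀ i : Fin n, ‖D i‖ ^ 2 ≤ 2 * ‖F i zstar‖ ^ 2 + 2 * ‖Fbar‖ ^ 2 := by
      intro i
      have h2 : ‖D i‖ ≤ ‖F i zstar‖ + ‖Fbar‖ := by
        simp only [hDdef]; exact norm_sub_le _ _
      nlinarith [norm_nonneg (D i), norm_nonneg (F i zstar), norm_nonneg Fbar,
        sq_nonneg (‖F i zstar‖ - ‖Fbar‖)]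
    calc ∑ i, ‖D i‖ ^ 2 ≤ ∑ i : Fin n, (2 * ‖F i zstar‖ ^ 2 + 2 * ‖Fbar‖ ^ 2) :=
          Finset.sum_le_sum (fun i _ => h1 i)
      _ = 2 * ∑ i, ‖F i zstar‖ ^ 2 + 2 * (n:ℝ) * ‖Fbar‖ ^ 2 := by
          rw [Finset.sum_add_distrib, ← Finset.mul_sum, Finset.sum_const, Finset.card_univ,
            Fintype.card_fin, nsmul_eq_mul]
          ring
      _ ≤ 2 * ((n:ℝ) * σstar ^ 2) + 2 * (n:ℝ) * σstar ^ 2 := by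
          have hb := mul_le_mul_of_nonneg_left hvar2 (by positivity : (0:ℝ) ≤ 2 * (n:ℝ))
          linarith
      _ = 4 * (n:ℝ) * σstar ^ 2 := by ring
  -- g is real at relevant points
  have gproxR : ∀ x, ∃ A : ℝ, g (prox x) = (A : EReal) :=
    exists_real_g_prox γ hγ0 g hg_bot hg_top prox hprox
  obtain ⟨As, hAs⟩ : ∃ A : ℝ, g zstar = (A : EReal) := by
    obtain ⟨y0, hy0⟩ := hg_top
    obtain ⟨r0, hr0⟩ : ∃ r0 : ℝ, g y0 = (r0 : EReal) :=
      ⟨(g y0).toReal, (EReal.coe_toReal hy0 (hg_bot y0)).symm⟩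
    refine ⟨(g zstar).toReal, (EReal.coe_toReal ?_ (hg_bot _)).symm⟩
    intro htop
    have h := hVI y0
    rw [htop, hr0, ← EReal.coe_add] at h
    exact (EReal.coe_lt_top _).not_ge h
  have hVIr : ∀ (v : EuclideanSpace ℝ (Fin d)) (Bv : ℝ), g v = (Bv : EReal) →
      As - Bv ≤ ⟪Fbar, v - zstar⟫ := by
    intro v Bv hBv
    have h := hVI v
    rw [hAs, hBv, ← EReal.coe_add] at h
    have h2 : As ≤ ⟪Fbar, v - zstar⟫ + Bv := by exact_mod_cast h
    linarith
  have hpkey : ∀ (x y : EuclideanSpace ℝ (Fin d)) (A B : ℝ),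
      g (prox x) = (A : EReal) → g y = (B : EReal) →
      γ * A - γ * B ≤ ⟪y - prox x, prox x - x⟫ :=
    fun x y A B hA hB => prox_key_of_half γ x y (prox x) A B
      (prox_half γ hγ0 g hg_bot hg_convex prox hprox x y A B hA hB)
  -- the per-step inequality
  have hstepmain : ∀ (i : Fin n) (zc : EuclideanSpace ℝ (Fin d)),
      ‖prox (zc - γ • F i (prox (zc - γ • F i zc))) - zstar‖ ^ 2
        ≤ q * ‖zc - zstar‖ ^ 2
          - (17/24) * (‖prox (zc - γ • F i (prox (zc - γ • F i zc))) - prox (zc - γ • F i zc)‖ ^ 2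
              + ‖prox (zc - γ • F i zc) - zc‖ ^ 2)
          - γ * μ * ‖prox (zc - γ • F i zc) - zstar‖ ^ 2
          + 2 * γ * ⟪D i, zstar - prox (zc - γ • F i zc)⟫ := by
    intro i zc
    set w : EuclideanSpace ℝ (Fin d) := prox (zc - γ • F i zc) with hw
    set zn : EuclideanSpace ℝ (Fin d) := prox (zc - γ • F i w) with hzn
    obtain ⟨Aw, hAw⟩ := gproxR (zc - γ • F i zc)
    obtain ⟨An, hAn⟩ := gproxR (zc - γ • F i w)
    have h1 := hpkey (zc - γ • F i w) zstar An As hAn hAs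
    have h2 := hpkey (zc - γ • F i zc) zn Aw An hAw hAn
    have h3 := hVIr w Aw hAw
    have ex1 : ⟪zstar - zn, zn - (zc - γ • F i w)⟫
        = ⟪zstar - zn, zn - zc⟫ + γ * ⟪zstar - zn, F i w⟫ := by
      have hv : zn - (zc - γ • F i w) = (zn - zc) + γ • F i w := by abel
      rw [hv, inner_add_right, real_inner_smul_right]
    have ex2 : ⟪zn - w, w - (zc - γ • F i zc)⟫
        = ⟪zn - w, w - zc⟫ + γ * ⟪zn - w, F i zc⟫ := by
      have hv : w - (zc - γ • F i zc) = (w - zc) + γ • F i zc := by abel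
      rw [hv, inner_add_right, real_inner_smul_right]
    rw [ex1] at h1
    rw [ex2] at h2
    have h3' : γ * As - γ * Aw ≤ γ * ⟪Fbar, w - zstar⟫ := by
      have := mul_le_mul_of_nonneg_left h3 (le_of_lt hγ0)
      linarith [this]
    have hsum : (0:ℝ) ≤ ⟪zstar - zn, zn - zc⟫ + γ * ⟪zstar - zn, F i w⟫ + ⟪zn - w, w - zc⟫
        + γ * ⟪zn - w, F i zc⟫ + γ * ⟪Fbar, w - zstar⟫ := by
      linarith [h1, h2, h3']
    have hcs : ⟪F i zc - F i w, zn - w⟫ ≤ L * ‖w - zc‖ * ‖zn - w‖ := by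
      have h4 := real_inner_le_norm (F i zc - F i w) (zn - w)
      have h5 := hLip i zc w
      have h6 : ‖F i zc - F i w‖ * ‖zn - w‖ ≤ (L * ‖zc - w‖) * ‖zn - w‖ :=
        mul_le_mul_of_nonneg_right h5 (norm_nonneg _)
      rw [norm_sub_rev zc w] at h6
      linarith
    have hgoal := step_core γ μ L hγ0 hμ hγμ hγL zstar zc w zn (F i w) (F i zc) (F i zstar)
      Fbar hsum (hmono i w zstar) hcs
    simpa only [hDdef, hqdef] using hgoal
  -- per-epoch contraction
  have hepochlem : ∀ (π : Equiv.Perm (Fin n)) (s : ℕ), s < S →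
      ‖z π s n - zstar‖ ^ 2 ≤ q ^ n * ‖z π s 0 - zstar‖ ^ 2
        + 49 * γ ^ 2 * (n:ℝ) ^ 3 * σstar ^ 2 := by
    intro π s hs
    refine epoch_bound n hn γ μ q (σstar ^ 2) hγ0 hμ hγμ0 hγμ hq0 hq1 hqn34 hqn_lb hσ2
      D zstar hDzero hDsq π (z π s) (zhalf π s) ?_
    intro t ht
    have h := hstepmain (π ⟨t, ht⟩) (z π s t)
    rw [← hhalf π s hs t ht, ← hstep π s hs t ht] at h
    exact h
  -- cross-epoch recursion
  have hepochs : ∀ (π : Equiv.Perm (Fin n)) (s : ℕ), s < S →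
      ‖z π s n - zstar‖ ^ 2 ≤ q ^ (n*(s+1)) * ‖z00 - zstar‖ ^ 2
        + (49 * γ ^ 2 * (n:ℝ) ^ 3 * σstar ^ 2) * ∑ k ∈ Finset.range (s+1), (q ^ n) ^ k := by
    intro π s
    induction s with
    | zero =>
      intro h0
      have h := hepochlem π 0 h0
      rw [hinit π] at h
      simpa using h
    | succ s ih =>
      intro hs1
      have ih' := ih (by omega)
      have hl := hepochlem π (s+1) hs1
      rw [hepoch π s (by omega)] at hl
      have h2 := mul_le_mul_of_nonneg_left ih' (pow_nonneg hq0 n)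
      have h3 : q ^ n * (q ^ (n*(s+1)) * ‖z00 - zstar‖ ^ 2
            + (49 * γ ^ 2 * (n:ℝ) ^ 3 * σstar ^ 2) * ∑ k ∈ Finset.range (s+1), (q ^ n) ^ k)
          = q ^ (n*(s+1+1)) * ‖z00 - zstar‖ ^ 2
            + (49 * γ ^ 2 * (n:ℝ) ^ 3 * σstar ^ 2)
              * (q ^ n * ∑ k ∈ Finset.range (s+1), (q ^ n) ^ k) := by
        rw [mul_add, ← mul_assoc, ← pow_add]
        have he : n + n*(s+1) = n*(s+1+1) := by ring
        rw [he]
        ring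
      rw [h3] at h2
      have h5 : ∑ k ∈ Finset.range (s+1+1), (q ^ n) ^ k
          = q ^ n * ∑ k ∈ Finset.range (s+1), (q ^ n) ^ k + 1 := geom_sum_succ
      calc ‖z π (s+1) n - zstar‖ ^ 2
          ≤ q ^ n * ‖z π s n - zstar‖ ^ 2 + 49 * γ ^ 2 * (n:ℝ) ^ 3 * σstar ^ 2 := hl
        _ ≤ q ^ (n*(s+1+1)) * ‖z00 - zstar‖ ^ 2
            + (49 * γ ^ 2 * (n:ℝ) ^ 3 * σstar ^ 2)
              * (q ^ n * ∑ k ∈ Finset.range (s+1), (q ^ n) ^ k)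
            + 49 * γ ^ 2 * (n:ℝ) ^ 3 * σstar ^ 2 := by linarith [h2]
        _ = q ^ (n*(s+1+1)) * ‖z00 - zstar‖ ^ 2
            + (49 * γ ^ 2 * (n:ℝ) ^ 3 * σstar ^ 2)
              * ∑ k ∈ Finset.range (s+1+1), (q ^ n) ^ k := by
            rw [h5]; ring
  -- final per-permutation bound
  have hfinπ : ∀ π : Equiv.Perm (Fin n), ‖z π (S-1) n - zstar‖ ^ 2
      ≤ q ^ (S*n) * ‖z00 - zstar‖ ^ 2 + 256 * γ * (n:ℝ) ^ 2 * σstar ^ 2 / μ := by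
    intro π
    have h := hepochs π (S-1) (by omega)
    have hSS : S - 1 + 1 = S := by omega
    rw [hSS] at h
    have hγμpos : (0:ℝ) < γ * μ := mul_pos hγ0 hμ
    have hqlt1 : q < 1 := by rw [hqdef]; linarith
    have hxlt1 : q ^ n < 1 := pow_lt_one₀ hq0 hqlt1 (by omega)
    have hgeom : ∑ k ∈ Finset.range S, (q ^ n) ^ k ≤ 1/(1 - q ^ n) := by
      rw [geom_sum_eq (ne_of_lt hxlt1)]
      have h2 : ((q ^ n) ^ S - 1)/(q ^ n - 1) = (1 - (q ^ n) ^ S)/(1 - q ^ n) := by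
        rw [← neg_div_neg_eq]; ring_nf
      rw [h2]
      have h3 : (0:ℝ) < 1 - q ^ n := by linarith
      have h4 : (0:ℝ) ≤ (q ^ n) ^ S := pow_nonneg (pow_nonneg hq0 n) S
      exact (div_le_div_iff_of_pos_right h3).mpr (by linarith)
    have hqn'34 : (3:ℝ)/4 ≤ q ^ (n-1) := by
      have hb := one_add_mul_le_pow (a := -(γ * μ / 2)) (by linarith) (n-1)
      have hcast : ((n-1:ℕ):ℝ) ≤ (n:ℝ) := by exact_mod_cast Nat.sub_le n 1
      have hc2 : (1:ℝ) + -(γ * μ / 2) = q := by rw [hqdef]; ring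
      rw [hc2] at hb
      have hc3 : (0:ℝ) ≤ γ * μ / 2 := by linarith
      nlinarith [hb, hnγμ4, mul_le_mul_of_nonneg_right hcast hc3]
    have hsum_lb : (n:ℝ) * q ^ (n-1) ≤ ∑ k ∈ Finset.range n, q ^ k := by
      have h1 : ∀ k ∈ Finset.range n, q ^ (n-1) ≤ q ^ k := by
        intro k hk
        have := Finset.mem_range.mp hk
        exact pow_le_pow_of_le_one hq0 hq1 (by omega)
      have h2 := Finset.card_nsmul_le_sum (Finset.range n) (fun k => q ^ k) (q ^ (n-1)) h1
      rw [Finset.card_range, nsmul_eq_mul] at h2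
      exact h2
    have hlb : 3/8*((n:ℝ)*(γ*μ)) ≤ 1 - q ^ n := by
      have hgs := geom_sum_mul q n
      have hid : 1 - q ^ n = (1 - q) * ∑ k ∈ Finset.range n, q ^ k := by
        linear_combination hgs
      have h1q : 1 - q = γ * μ / 2 := by rw [hqdef]; ring
      rw [hid, h1q]
      have h6 : (3:ℝ)/4 * (n:ℝ) ≤ ∑ k ∈ Finset.range n, q ^ k := by
        nlinarith [hqn'34, hsum_lb, hnR0]
      nlinarith [h6, hγμpos]
    have hnoise : (49 * γ ^ 2 * (n:ℝ) ^ 3 * σstar ^ 2) * ∑ k ∈ Finset.range S, (q ^ n) ^ k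
        ≤ 256 * γ * (n:ℝ) ^ 2 * σstar ^ 2 / μ := by
      have hC0 : (0:ℝ) ≤ 49 * γ ^ 2 * (n:ℝ) ^ 3 * σstar ^ 2 := by positivity
      have h1 := mul_le_mul_of_nonneg_left hgeom hC0
      have hpos : (0:ℝ) < 3/8*((n:ℝ)*(γ*μ)) := by nlinarith [hγμpos, hnR0]
      have h2 : 1/(1 - q ^ n) ≤ 1/(3/8*((n:ℝ)*(γ*μ))) := one_div_le_one_div_of_le hpos hlb
      have h3 : (49 * γ ^ 2 * (n:ℝ) ^ 3 * σstar ^ 2) * (1/(3/8*((n:ℝ)*(γ*μ))))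
          = (392/3)*(γ*(n:ℝ)^2*σstar^2/μ) := by
        field_simp
        ring
      have h5 : (0:ℝ) ≤ γ*(n:ℝ)^2*σstar^2/μ := by positivity
      have h6 := mul_le_mul_of_nonneg_left h2 hC0
      calc (49 * γ ^ 2 * (n:ℝ) ^ 3 * σstar ^ 2) * ∑ k ∈ Finset.range S, (q ^ n) ^ k
          ≤ (49 * γ ^ 2 * (n:ℝ) ^ 3 * σstar ^ 2) * (1/(1 - q ^ n)) := h1
        _ ≤ (49 * γ ^ 2 * (n:ℝ) ^ 3 * σstar ^ 2) * (1/(3/8*((n:ℝ)*(γ*μ)))) := h6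
        _ = (392/3)*(γ*(n:ℝ)^2*σstar^2/μ) := h3
        _ ≤ 256*(γ*(n:ℝ)^2*σstar^2/μ) := by linarith
        _ = 256 * γ * (n:ℝ) ^ 2 * σstar ^ 2 / μ := by ring
    rw [Nat.mul_comm n S] at h
    linarith [h, hnoise]
  -- average over permutations
  have hcard : (0:ℝ) < (Fintype.card (Equiv.Perm (Fin n)) : ℝ) := by
    exact_mod_cast Fintype.card_pos
  rw [div_le_iff₀ hcard]
  calc ∑ π : Equiv.Perm (Fin n), ‖z π (S-1) n - zstar‖ ^ 2
      ≤ ∑ _π : Equiv.Perm (Fin n),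
          (q ^ (S*n) * ‖z00 - zstar‖ ^ 2 + 256 * γ * (n:ℝ) ^ 2 * σstar ^ 2 / μ) :=
        Finset.sum_le_sum (fun π _ => hfinπ π)
    _ = (Fintype.card (Equiv.Perm (Fin n)) : ℝ)
          * (q ^ (S*n) * ‖z00 - zstar‖ ^ 2 + 256 * γ * (n:ℝ) ^ 2 * σstar ^ 2 / μ) := by
        rw [Finset.sum_const, Finset.card_univ, nsmul_eq_mul]
    _ = (q ^ (S*n) * ‖z00 - zstar‖ ^ 2 + 256 * γ * (n:ℝ) ^ 2 * σstar ^ 2 / μ)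
          * (Fintype.card (Equiv.Perm (Fin n)) : ℝ) := by ring
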